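/- arXiv:1407.6696 — 4 statements merged into one kernel-verified Lean document; each statement's English description precedes it below -/
import Mathlib

section
/- For z, w in the open unit disc of ℂ, one has √((1-|z|²)(1-|w|²)) ≤ |1 - conj(z)·w| ≤ √((1-|z|²)(1-|w|²)) + |z - w|. -/
theorem stmt_1 (z w : ℂ) (hz : ‖z‖ < 1) (hw : ‖w‖ < 1) :
    Real.sqrt ((1 - ‖z‖ ^ 2) * (1 - ‖w‖ ^ 2)) ≤
      ‖1 - (starRingEnd ℂ) z * w‖ ∧
    ‖1 - (starRingEnd ℂ) z * w‖ ≤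
      Real.sqrt ((1 - ‖z‖ ^ 2) * (1 - ‖w‖ ^ 2)) + ‖z - w‖ := by
  set P : ℝ := (1 - ‖z‖ ^ 2) * (1 - ‖w‖ ^ 2) with hP
  set a : ℝ := ‖z - w‖ with ha
  have hPnn : 0 ≤ P := by
    have h1 : ‖z‖ ^ 2 ≤ 1 := by nlinarith [norm_nonneg z]
    have h2 : ‖w‖ ^ 2 ≤ 1 := by nlinarith [norm_nonneg w]
    nlinarith
  have hann : 0 ≤ a := norm_nonneg _
  have keyC : ((Complex.normSq (1 - (starRingEnd ℂ) z * w) : ℂ))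
      = (1 - Complex.normSq z) * (1 - Complex.normSq w) + Complex.normSq (z - w) := by
    simp only [← Complex.mul_conj, map_sub, map_mul, map_one, Complex.conj_conj]
    ring
  have key : Complex.normSq (1 - (starRingEnd ℂ) z * w)
      = (1 - Complex.normSq z) * (1 - Complex.normSq w) + Complex.normSq (z - w) := by
    exact_mod_cast keyC
  have hsq : ‖1 - (starRingEnd ℂ) z * w‖ ^ 2 = P + a ^ 2 := by
    rw [Complex.sq_norm, key, ← Complex.sq_norm z, ← Complex.sq_norm w, ← Complex.sq_norm (z - w), hP, ha]
  have habs : ‖1 - (starRingEnd ℂ) z * w‖ = Real.sqrt (P + a ^ 2) := by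
    rw [← hsq, Real.sqrt_sq (norm_nonneg _)]
  constructor
  · rw [habs]
    exact Real.sqrt_le_sqrt (by nlinarith)
  · rw [habs]
    calc Real.sqrt (P + a ^ 2) ≤ Real.sqrt ((Real.sqrt P + a) ^ 2) := by
          apply Real.sqrt_le_sqrt
          nlinarith [Real.sq_sqrt hPnn, Real.sqrt_nonneg P]
      _ = Real.sqrt P + a := Real.sqrt_sq (by positivity)
end

section
/- For all complex z, w in the open unit disc: |1 - conj(z)·w|² ≤ 2(1-|z|)(1-|w|)(1+|z|)²(1+|w|)² + |z-w|²·(|z| + |w| + |z|·|w|)². -/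
lemma aux_key (a b : ℝ) (ha0 : 0 ≤ a) (hb0 : 0 ≤ b) (ha : a < 1) (hb : b < 1)
    (h : a + b + a * b < 1) :
    (1 - a ^ 2) * (1 - b ^ 2) + (a + b) ^ 2 * (1 - (a + b + a * b) ^ 2) ≤
      2 * (1 - a) * (1 - b) * (1 + a) ^ 2 * (1 + b) ^ 2 := by
  nlinarith [mul_nonneg ha0 hb0, mul_pos (sub_pos.2 ha) (sub_pos.2 hb),
    sq_nonneg (a - b), sq_nonneg (a + b), sq_nonneg (a * b),
    mul_nonneg (mul_nonneg ha0 hb0) (mul_nonneg ha0 hb0),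
    mul_nonneg (mul_nonneg ha0 ha0) hb0, mul_nonneg (mul_nonneg hb0 hb0) ha0,
    mul_nonneg (mul_nonneg ha0 hb0) (sub_pos.2 h).le,
    mul_nonneg (sub_pos.2 h).le (sub_pos.2 h).le,
    mul_nonneg (mul_nonneg (sub_pos.2 ha).le (sub_pos.2 hb).le) (sub_pos.2 h).le]

lemma aux_stmt5 (a b s : ℝ) (ha0 : 0 ≤ a) (hb0 : 0 ≤ b) (hs0 : 0 ≤ s)
    (ha : a < 1) (hb : b < 1) (hsab : s ≤ a + b) :
    (1 - a ^ 2) * (1 - b ^ 2) + s ^ 2 ≤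
      2 * (1 - a) * (1 - b) * (1 + a) ^ 2 * (1 + b) ^ 2 + s ^ 2 * (a + b + a * b) ^ 2 := by
  rcases le_or_gt 1 (a + b + a * b) with h | h
  · have h1 : s ^ 2 ≤ s ^ 2 * (a + b + a * b) ^ 2 :=
      le_mul_of_one_le_right (sq_nonneg s) (by nlinarith)
    have h2 : (1 - a ^ 2) * (1 - b ^ 2) ≤ 2 * (1 - a) * (1 - b) * (1 + a) ^ 2 * (1 + b) ^ 2 := by
      nlinarith [mul_pos (sub_pos.2 ha) (sub_pos.2 hb), mul_nonneg ha0 hb0,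
        mul_nonneg (mul_nonneg ha0 hb0) (mul_nonneg ha0 hb0)]
    linarith
  · have hs2 : s ^ 2 ≤ (a + b) ^ 2 := by nlinarith
    have hc : 0 ≤ 1 - (a + b + a * b) ^ 2 := by
      have hnn : 0 ≤ a + b + a * b := by positivity
      nlinarith
    have h1 : s ^ 2 * (1 - (a + b + a * b) ^ 2) ≤ (a + b) ^ 2 * (1 - (a + b + a * b) ^ 2) :=
      mul_le_mul_of_nonneg_right hs2 hc
    have h2 := aux_key a b ha0 hb0 ha hb h
    nlinarith

theorem stmt_5 (z w : ℂ) (hz : ‖z‖ < 1) (hw : ‖w‖ < 1) :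
    ‖1 - (starRingEnd ℂ) z * w‖ ^ 2 ≤
      2 * (1 - ‖z‖) * (1 - ‖w‖) *
        (1 + ‖z‖) ^ 2 * (1 + ‖w‖) ^ 2 +
      ‖z - w‖ ^ 2 *
        (‖z‖ + ‖w‖ + ‖z‖ * ‖w‖) ^ 2 := by
  have key : ‖1 - (starRingEnd ℂ) z * w‖ ^ 2 =
      (1 - ‖z‖ ^ 2) * (1 - ‖w‖ ^ 2) + ‖z - w‖ ^ 2 := by
    simp only [Complex.sq_norm, Complex.normSq_apply, Complex.sub_re, Complex.sub_im,
      Complex.one_re, Complex.one_im, Complex.mul_re, Complex.mul_im,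
      Complex.conj_re, Complex.conj_im]
    ring
  rw [key]
  exact aux_stmt5 _ _ _ (norm_nonneg z) (norm_nonneg w) (norm_nonneg _)
    hz hw (by simpa using norm_sub_le z w)
end

section
/- For z, w in the open unit disc: 1 + 2|z-w|·(|1 - conj(z)·w| + |z-w|)/((1-|z|²)(1-|w|²)) ≤ (1 + √2·|z-w|/√((1-|z|)(1-|w|)))². -/
set_option maxHeartbeats 1000000 in
theorem core (a b c d S : ℝ) (ha0 : 0 ≤ a) (hb0 : 0 ≤ b) (ha : a < 1) (hb : b < 1)
    (hd0 : 0 ≤ d) (hc0 : 0 ≤ c) (hdab : d ≤ a + b)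
    (hS0 : 0 < S) (hS2 : S^2 = (1-a)*(1-b))
    (key : c^2 = (1+a)*(1+b)*S^2 + d^2) :
    c ≤ Real.sqrt 2 * ((1+a)*(1+b)) * S + (a+b+a*b) * d := by
  have h2 : (Real.sqrt 2)^2 = 2 := Real.sq_sqrt (by norm_num)
  have h20 : 0 ≤ Real.sqrt 2 := Real.sqrt_nonneg 2
  have hab : 0 ≤ a*b := mul_nonneg ha0 hb0
  have hrhs0 : 0 ≤ Real.sqrt 2 * ((1+a)*(1+b)) * S + (a+b+a*b) * d := by positivity
  have hexp : (Real.sqrt 2 * ((1+a)*(1+b)) * S + (a+b+a*b) * d)^2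
      = (Real.sqrt 2)^2*((1+a)*(1+b))^2*S^2
        + 2*Real.sqrt 2*(((1+a)*(1+b))*S*((a+b+a*b)*d)) + ((a+b+a*b)*d)^2 := by ring
  rw [h2] at hexp
  have hmid : 0 ≤ 2*Real.sqrt 2*(((1+a)*(1+b))*S*((a+b+a*b)*d)) := by positivity
  have e2 : (1+a)*(1+b)*S^2 ≤ 2*((1+a)*(1+b))^2*S^2 := by
    nlinarith [sq_nonneg S, mul_nonneg (mul_nonneg ha0 hb0) (sq_nonneg S), mul_nonneg ha0 (sq_nonneg S), mul_nonneg hb0 (sq_nonneg S)]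
  have g : (1-(a+b+a*b)^2)*d^2 ≤ (1+a)*(1+b)*S^2 := by
    rcases le_or_gt 1 (a+b+a*b) with h | h
    · have h5 : (1-(a+b+a*b)^2) ≤ 0 := by nlinarith
      have h6 := mul_nonpos_of_nonpos_of_nonneg h5 (sq_nonneg d)
      have h7 : 0 ≤ (1+a)*(1+b)*S^2 := by positivity
      linarith
    · have hs1 : a+b < 1 := by linarith
      have hds : d^2 ≤ (a+b)^2 := by nlinarith
      have f1 : (1-(a+b+a*b))*d^2 ≤ (1-a)*(1-b) := by
        calc (1-(a+b+a*b))*d^2 ≤ (1-(a+b+a*b))*(a+b)^2 :=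
              mul_le_mul_of_nonneg_left hds (by linarith)
          _ ≤ (1-(a+b))*(a+b)^2 := by nlinarith [mul_nonneg hab (sq_nonneg (a+b))]
          _ ≤ (1-(a+b))*1 := by nlinarith [mul_nonneg (by linarith : (0:ℝ) ≤ 1-(a+b)) (by nlinarith : (0:ℝ) ≤ 1-(a+b)^2)]
          _ ≤ (1-a)*(1-b) := by nlinarith
      have h4 := mul_le_mul_of_nonneg_left f1 (by linarith : (0:ℝ) ≤ 1+(a+b+a*b))
      rw [hS2]; linarith [h4]
  have hsq : c^2 ≤ (Real.sqrt 2 * ((1+a)*(1+b)) * S + (a+b+a*b) * d)^2 := by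
    rw [hexp]; nlinarith [g, e2, hmid]
  calc c = Real.sqrt (c^2) := by rw [Real.sqrt_sq hc0]
    _ ≤ Real.sqrt ((Real.sqrt 2 * ((1+a)*(1+b)) * S + (a+b+a*b) * d)^2) := Real.sqrt_le_sqrt hsq
    _ = _ := Real.sqrt_sq hrhs0

set_option maxHeartbeats 1000000 in
theorem stmt_8 (z w : ℂ) (hz : ‖z‖ < 1) (hw : ‖w‖ < 1) :
    1 + 2 * ‖z - w‖ *
        (‖1 - (starRingEnd ℂ) z * w‖ + ‖z - w‖) /
        ((1 - ‖z‖ ^ 2) * (1 - ‖w‖ ^ 2)) ≤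
      (1 + Real.sqrt 2 * ‖z - w‖ /
        Real.sqrt ((1 - ‖z‖) * (1 - ‖w‖))) ^ 2 := by
  set a := ‖z‖ with ha_def
  set b := ‖w‖ with hb_def
  set d := ‖z - w‖ with hd_def
  set c := ‖1 - (starRingEnd ℂ) z * w‖ with hc_def
  have ha0 : 0 ≤ a := norm_nonneg z
  have hb0 : 0 ≤ b := norm_nonneg w
  have hd0 : 0 ≤ d := norm_nonneg _
  have hc0 : 0 ≤ c := norm_nonneg _
  have hdab : d ≤ a + b := by
    simpa [hd_def, ha_def, hb_def ] using norm_sub_le z w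
  have hns : Complex.normSq (1 - (starRingEnd ℂ) z * w) - Complex.normSq (z - w)
      = (1 - Complex.normSq z) * (1 - Complex.normSq w) := by
    simp [Complex.normSq_apply, Complex.sub_re, Complex.sub_im, Complex.mul_re, Complex.mul_im]
    ring
  rw [← Complex.sq_norm, ← Complex.sq_norm, ← Complex.sq_norm, ← Complex.sq_norm] at hns
  have hP : 0 < (1-a)*(1-b) := by nlinarith
  set S := Real.sqrt ((1-a)*(1-b)) with hS_def
  have hS0 : 0 < S := Real.sqrt_pos.mpr hP
  have hS2 : S^2 = (1-a)*(1-b) := Real.sq_sqrt hP.le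
  have key : c^2 = (1+a)*(1+b)*S^2 + d^2 := by rw [hS2]; nlinarith [hns]
  have h2 : (Real.sqrt 2)^2 = 2 := Real.sq_sqrt (by norm_num)
  have hcore := core a b c d S ha0 hb0 hz hw hd0 hc0 hdab hS0 hS2 key
  have hX : (1 - a^2)*(1 - b^2) = (1+a)*(1+b)*S^2 := by rw [hS2]; ring
  rw [hX]
  have hk0 : (0:ℝ) < (1+a)*(1+b) := by nlinarith
  have hden : (0:ℝ) < (1+a)*(1+b)*S^2 := by positivity
  have hnum : 2*d*(c+d) ≤ 2*d*((1+a)*(1+b)*(Real.sqrt 2*S+d)) := by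
    have hcd : c + d ≤ (1+a)*(1+b)*(Real.sqrt 2*S+d) := by nlinarith [hcore]
    exact mul_le_mul_of_nonneg_left hcd (by linarith)
  have step1 : 2*d*(c+d) / ((1+a)*(1+b)*S^2)
      ≤ 2*d*((1+a)*(1+b)*(Real.sqrt 2*S+d)) / ((1+a)*(1+b)*S^2) :=
    (div_le_div_iff_of_pos_right hden).mpr hnum
  have step2 : 2*d*((1+a)*(1+b)*(Real.sqrt 2*S+d)) / ((1+a)*(1+b)*S^2)
      = 2*Real.sqrt 2*d/S + 2*d^2/S^2 := by
    field_simp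
  have hx2 : (Real.sqrt 2*d/S)^2 = 2*d^2/S^2 := by
    rw [div_pow, mul_pow, h2]
  have hrhs : (1 + Real.sqrt 2*d/S)^2 = 1 + 2*(Real.sqrt 2*d/S) + 2*d^2/S^2 := by
    rw [add_sq, one_pow, hx2]; ring
  rw [hrhs]
  have : 2*(Real.sqrt 2*d/S) = 2*Real.sqrt 2*d/S := by ring
  rw [this]
  linarith [step1, step2.le, step2.ge]
end

section
/- For z, w in the open unit disc, the Poincaré distance k(z,w) = arctanh(|z-w|/|1-conj(z)·w|) satisfies: if |z-w|² ≤ (1-|z|)(1-|w|), then |z-w|/(8√((1-|z|)(1-|w|))) ≤ k(z,w) ≤ 2|z-w|/√((1-|z|)(1-|w|)). -/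
noncomputable def arctanh (t : ℝ) : ℝ := Real.log ((1 + t) / (1 - t)) / 2


private lemma sq_le_imp {x y : ℝ} (hx : 0 ≤ x) (hy : 0 ≤ y) (h : x ^ 2 ≤ y ^ 2) : x ≤ y := by
  nlinarith [sq_nonneg (x - y), sq_nonneg (x + y)]

private lemma sq_lt_imp {x y : ℝ} (hx : 0 ≤ x) (hy : 0 ≤ y) (h : x ^ 2 < y ^ 2) : x < y := by
  nlinarith [sq_nonneg (x - y), sq_nonneg (x + y)]

set_option maxHeartbeats 2000000 in
theorem stmt_19 (z w : ℂ) (hz : ‖z‖ < 1) (hw : ‖w‖ < 1)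
    (h : ‖z - w‖ ^ 2 ≤ (1 - ‖z‖) * (1 - ‖w‖)) :
    ‖z - w‖ / (8 * Real.sqrt ((1 - ‖z‖) * (1 - ‖w‖))) ≤
      arctanh (‖z - w‖ / ‖1 - (starRingEnd ℂ) z * w‖) ∧
    arctanh (‖z - w‖ / ‖1 - (starRingEnd ℂ) z * w‖) ≤
      2 * ‖z - w‖ / Real.sqrt ((1 - ‖z‖) * (1 - ‖w‖)) := by
  set A := ‖z‖ with hA
  set B := ‖w‖ with hB
  set a := ‖z - w‖ with ha
  set D := ‖1 - (starRingEnd ℂ) z * w‖ with hDdef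
  set s := Real.sqrt ((1 - A) * (1 - B)) with hs
  have hA0 : 0 ≤ A := norm_nonneg _
  have hB0 : 0 ≤ B := norm_nonneg _
  have ha0 : 0 ≤ a := norm_nonneg _
  have hD0 : 0 ≤ D := norm_nonneg _
  have key : D ^ 2 = (1 - A ^ 2) * (1 - B ^ 2) + a ^ 2 := by
    rw [hDdef, hA, hB, ha, Complex.sq_norm, Complex.sq_norm, Complex.sq_norm, Complex.sq_norm]
    simp only [Complex.normSq_apply, Complex.sub_re, Complex.sub_im, Complex.one_re,
      Complex.one_im, Complex.mul_re, Complex.mul_im, Complex.conj_re, Complex.conj_im]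
    ring
  have hA1 : (0:ℝ) < 1 - A := by linarith
  have hB1 : (0:ℝ) < 1 - B := by linarith
  set q := Real.sqrt ((1 - A ^ 2) * (1 - B ^ 2)) with hq
  have hs2 : s ^ 2 = (1 - A) * (1 - B) := Real.sq_sqrt (by positivity)
  have hP1 : (0:ℝ) < 1 - A ^ 2 := by nlinarith
  have hP2 : (0:ℝ) < 1 - B ^ 2 := by nlinarith
  have hq2 : q ^ 2 = (1 - A ^ 2) * (1 - B ^ 2) := Real.sq_sqrt (by positivity)
  have hs_pos : 0 < s := Real.sqrt_pos.mpr (by positivity)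
  have hq_pos : 0 < q := Real.sqrt_pos.mpr (by positivity)
  have key' : D ^ 2 = q ^ 2 + a ^ 2 := by rw [hq2]; exact key
  have hABnn : (0:ℝ) ≤ A + B + A * B := by positivity
  have hAB3 : (0:ℝ) ≤ 3 - A - B - A * B := by nlinarith
  have hs2q2 : s ^ 2 ≤ q ^ 2 := by
    rw [hs2, hq2]
    nlinarith [mul_nonneg (mul_nonneg hA1.le hB1.le) hABnn]
  have hq2s2 : q ^ 2 ≤ (2 * s) ^ 2 := by
    rw [hq2]
    nlinarith [mul_nonneg (mul_nonneg hA1.le hB1.le) hAB3, hs2]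
  clear_value A B a D s q
  clear hA hB ha hDdef hs hq key
  have ha_le_s : a ≤ s := sq_le_imp ha0 hs_pos.le (by rw [hs2]; exact h)
  have hsq : s ≤ q := sq_le_imp hs_pos.le hq_pos.le hs2q2
  have hq2s : q ≤ 2 * s := sq_le_imp hq_pos.le (by linarith) hq2s2
  have hqD : q ≤ D := sq_le_imp hq_pos.le hD0 (by nlinarith [key', sq_nonneg a])
  have hD_pos : 0 < D := lt_of_lt_of_le hq_pos hqD
  have hDqa : D ≤ q + a := sq_le_imp hD0 (by linarith)
    (by nlinarith [key', mul_nonneg hq_pos.le ha0])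
  have haD : a < D := sq_lt_imp ha0 hD0 (by nlinarith [key', pow_pos hq_pos 2])
  have hDa_pos : 0 < 1 - a / D := by
    rw [sub_pos, div_lt_one hD_pos]; exact haD
  have harg : (1 + a / D) / (1 - a / D) = ((D + a) / q) ^ 2 := by
    have h1 : 1 + a / D = (D + a) / D := by field_simp
    have h2 : 1 - a / D = (D - a) / D := by field_simp
    have h3 : (D + a) / D / ((D - a) / D) = (D + a) / (D - a) := by
      rw [div_div_div_comm, div_self (ne_of_gt hD_pos), div_one]
    rw [h1, h2, h3, div_pow,
      div_eq_div_iff (ne_of_gt (sub_pos.mpr haD)) (by positivity : (q ^ 2 : ℝ) ≠ 0)]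
    linear_combination (-(D + a)) * key'
  have hlog : arctanh (a / D) = Real.log ((D + a) / q) := by
    unfold arctanh
    rw [harg, Real.log_pow]
    push_cast
    ring
  have hr_pos : 0 < (D + a) / q := by positivity
  constructor
  · rw [hlog]
    have h1 : 1 - ((D + a) / q)⁻¹ ≤ Real.log ((D + a) / q) :=
      Real.one_sub_inv_le_log_of_pos hr_pos
    have h2 : ((D + a) / q)⁻¹ = q / (D + a) := by rw [inv_div]
    have h3 : a / (8 * s) ≤ 1 - q / (D + a) := by
      rw [le_sub_iff_add_le]
      have hDA_pos : 0 < D + a := by linarith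
      rw [div_add_div _ _ (by positivity) (by positivity), div_le_one (by positivity)]
      have hDa4 : D + a ≤ 4 * s := by linarith
      nlinarith [hs_pos, ha0, mul_nonneg ha0 hs_pos.le]
    calc a / (8 * s) ≤ 1 - q / (D + a) := h3
      _ ≤ Real.log ((D + a) / q) := by rw [← h2]; exact h1
  · rw [hlog]
    have h1 : Real.log ((D + a) / q) ≤ (D + a) / q - 1 :=
      Real.log_le_sub_one_of_pos hr_pos
    have h2 : (D + a) / q - 1 ≤ 2 * a / s := by
      rw [sub_le_iff_le_add, div_le_iff₀ hq_pos]
      have h4 : 2 * a ≤ 2 * a / s * q := by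
        rw [div_mul_eq_mul_div, le_div_iff₀ hs_pos]
        nlinarith
      nlinarith
    linarith
end
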